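/- Let A be an algebra over an infinite field F and let f be a noncommutative polynomial in F⟨X_1, X_2, ...⟩. Then the linear span of the set of values f(a_1,...,a_n) for a_i ∈ A is a Lie ideal of A, i.e., it is closed under taking commutators with arbitrary elements of A. -/

import Mathlib

open Polynomial

/-- Vandermonde-type lemma: if a polynomial expression in λ with coefficients
in a vector space lands in a submodule for every λ of an infinite field, then
each coefficient lies in the submodule. -/
lemma span_coeff_mem {F V : Type*} [Field F] [Infinite F] [AddCommGroup V] [Module F V]
    (M : Submodule F V) (c : ℕ → V) (N : ℕ)
    (h : ∀ l : F, (∑ j ∈ Finset.range N, l ^ j • c j) ∈ M) :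
    ∀ j < N, c j ∈ M := by
  intro j hj
  have hπ : ∀ l : F, (∑ i ∈ Finset.range N, l ^ i • M.mkQ (c i)) = 0 := by
    intro l
    have h0 : M.mkQ (∑ j ∈ Finset.range N, l ^ j • c j) = 0 := by
      rw [Submodule.mkQ_apply, Submodule.Quotient.mk_eq_zero]
      exact h l
    rw [← h0, map_sum]
    exact Finset.sum_congr rfl fun i _ => by rw [map_smul]
  have key : M.mkQ (c j) = 0 := by
    rw [← Module.forall_dual_apply_eq_zero_iff (R := F)]
    intro φ
    set q : F[X] := ∑ i ∈ Finset.range N, Polynomial.C (φ (M.mkQ (c i))) * Polynomial.X ^ i with hq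
    have hq0 : q = 0 := by
      apply Polynomial.zero_of_eval_zero
      intro l
      have h1 : q.eval l = ∑ i ∈ Finset.range N, φ (M.mkQ (c i)) * l ^ i := by
        rw [hq]
        simp [Polynomial.eval_finset_sum]
      rw [h1]
      have h2 : ∑ i ∈ Finset.range N, φ (M.mkQ (c i)) * l ^ i
          = φ (∑ i ∈ Finset.range N, l ^ i • M.mkQ (c i)) := by
        rw [map_sum]
        exact Finset.sum_congr rfl fun i _ => by rw [map_smul, smul_eq_mul, mul_comm]
      rw [h2, hπ l, map_zero]
    have := congrArg (fun p => Polynomial.coeff p j) hq0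
    simpa [hq, Polynomial.finset_sum_coeff, Polynomial.coeff_C_mul,
      Polynomial.coeff_X_pow, Finset.sum_ite_eq' (Finset.range N), hj] using this
  rwa [Submodule.mkQ_apply, Submodule.Quotient.mk_eq_zero] at key

theorem stmt1 {F A : Type*} [Field F] [Infinite F] [Ring A] [Algebra F A]
    (f : FreeAlgebra F ℕ) (x : A)
    (hx : x ∈ Submodule.span F {y : A | ∃ a : ℕ → A, (FreeAlgebra.lift F a) f = y})
    (b : A) :
    x * b - b * x ∈ Submodule.span F {y : A | ∃ a : ℕ → A, (FreeAlgebra.lift F a) f = y} := by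
  set S : Set A := {y : A | ∃ a : ℕ → A, (FreeAlgebra.lift F a) f = y} with hS
  set M := Submodule.span F S with hM
  -- The key step: values of f satisfy the claim
  have key : ∀ a : ℕ → A, ((FreeAlgebra.lift F a) f) * b - b * ((FreeAlgebra.lift F a) f) ∈ M := by
    intro a
    set d : ℕ → A := fun i => a i * b - b * a i with hd
    set u : ℕ → Polynomial A := fun i => Polynomial.C (a i) + Polynomial.C (d i) * Polynomial.X
      with hu
    set p : Polynomial A := (FreeAlgebra.lift F u) f with hp
    -- evaluation algebra hom at the central element (algebraMap F A l)
    have hcomm : ∀ l : F, ∀ c : A, Commute ((AlgHom.id F A) c) (algebraMap F A l) :=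
      fun l c => (Algebra.commutes l c).symm
    set ev : F → (Polynomial A →ₐ[F] A) :=
      fun l => Polynomial.eval₂AlgHom (AlgHom.id F A) (algebraMap F A l) (hcomm l) with hev
    -- each evaluation is a value of f
    have hval : ∀ l : F, ev l p ∈ S := by
      intro l
      have hcompose : (ev l).comp (FreeAlgebra.lift F u) =
          FreeAlgebra.lift F (fun i => a i + l • d i) := by
        apply FreeAlgebra.hom_ext
        funext i
        simp [hev, hu, Algebra.smul_def, Algebra.commutes]
      refine ⟨fun i => a i + l • d i, ?_⟩
      rw [← hcompose]; rfl
    -- expand evaluation as a sum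
    have hexp : ∀ l : F, ev l p = ∑ j ∈ Finset.range (p.natDegree + 2), l ^ j • p.coeff j := by
      intro l
      have := Polynomial.eval₂_eq_sum_range' (RingHom.id A)
        (n := p.natDegree + 2) (p := p) (by omega) (algebraMap F A l)
      have h2 : ∀ j : ℕ, (RingHom.id A) (p.coeff j) * (algebraMap F A l) ^ j
          = l ^ j • p.coeff j := by
        intro j
        rw [RingHom.id_apply, ← map_pow, ← Algebra.commutes, ← Algebra.smul_def]
      calc ev l p = Polynomial.eval₂ (RingHom.id A) (algebraMap F A l) p := rfl
        _ = ∑ j ∈ Finset.range (p.natDegree + 2),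
              (RingHom.id A) (p.coeff j) * (algebraMap F A l) ^ j := this
        _ = ∑ j ∈ Finset.range (p.natDegree + 2), l ^ j • p.coeff j := by
              exact Finset.sum_congr rfl fun j _ => h2 j
    -- each coefficient of p is in M
    have hcoeff : ∀ j < p.natDegree + 2, p.coeff j ∈ M := by
      apply span_coeff_mem M (fun j => p.coeff j) (p.natDegree + 2)
      intro l
      rw [← hexp l]
      exact Submodule.subset_span (hval l)
    -- identify coeff 1 with the commutator, by induction on the free algebra element
    have hid : ∀ g : FreeAlgebra F ℕ,
        ((FreeAlgebra.lift F u) g).coeff 0 = (FreeAlgebra.lift F a) g ∧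
        ((FreeAlgebra.lift F u) g).coeff 1 =
          ((FreeAlgebra.lift F a) g) * b - b * ((FreeAlgebra.lift F a) g) := by
      intro g
      induction g using FreeAlgebra.induction with
      | grade0 r =>
        rw [AlgHom.commutes, AlgHom.commutes, Polynomial.algebraMap_apply]
        constructor
        · simp
        · rw [Polynomial.coeff_C]
          simp
          rw [Algebra.commutes, sub_self]
      | grade1 i =>
        constructor
        · simp [hu]
        · simp [hu, hd]
      | mul g1 g2 ih1 ih2 =>
        obtain ⟨h10, h11⟩ := ih1
        obtain ⟨h20, h21⟩ := ih2
        constructor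
        · simp [Polynomial.mul_coeff_zero, h10, h20]
        · rw [map_mul, Polynomial.coeff_mul, Finset.Nat.sum_antidiagonal_eq_sum_range_succ_mk]
          simp only [Finset.sum_range_succ, Finset.sum_range_one]
          rw [h10, h11, h20, h21, map_mul]
          simp only [Finset.range_zero, Finset.sum_empty, zero_add]
          noncomm_ring
      | add g1 g2 ih1 ih2 =>
        obtain ⟨h10, h11⟩ := ih1
        obtain ⟨h20, h21⟩ := ih2
        constructor
        · simp [h10, h20]
        · rw [map_add, Polynomial.coeff_add, h11, h21, map_add, add_mul, mul_add]
          abel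
    have := (hid f).2
    rw [← hp] at this
    rw [← this]
    exact hcoeff 1 (by omega)
  -- span induction
  set L : A →ₗ[F] A := LinearMap.mulRight F b - LinearMap.mulLeft F b with hL
  have hLx : ∀ y : A, L y = y * b - b * y := fun y => rfl
  have : L x ∈ M := by
    induction hx using Submodule.span_induction with
    | mem y hy =>
      obtain ⟨a, ha⟩ := hy
      rw [hLx, ← ha]
      exact key a
    | zero => simp
    | add y z _ _ hy hz => rw [map_add]; exact M.add_mem hy hz
    | smul c y _ hy => rw [map_smul]; exact M.smul_mem c hy
  rwa [hLx] at this
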